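/- For α > 0, n ≥ 0 and 0 ≤ k < 2^{n+1} with binary expansion k = Σ_{i=0}^n 2^i ε_i: f_α((k+1)/2^{n+1}) - f_α(k/2^{n+1}) = Σ_{i=0}^n (-1)^{ε_i} / 2^{(n-i)α + i}. -/

import Mathlib

/-- The tent map `φ(x) = 2 inf{|x-n| : n ∈ ℤ}`. -/
noncomputable def tent (x : ℝ) : ℝ := 2 * ⨅ n : ℤ, |x - (n:ℝ)|

/-- `f_α(x) = ∑_{j=0}^∞ 2^{-αj} φ(2^j x)`. -/
noncomputable def takagi (α x : ℝ) : ℝ :=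
  ∑' j : ℕ, (1 / (2:ℝ) ^ (α * (j:ℝ))) * tent ((2:ℝ) ^ (j:ℕ) * x)

lemma iInf_abs_sub (x : ℝ) : ⨅ n : ℤ, |x - (n:ℝ)| = min (Int.fract x) (1 - Int.fract x) := by
  have hf0 := Int.fract_nonneg x
  have hf1 := Int.fract_lt_one x
  have hfe : Int.fract x = x - ⌊x⌋ := Int.self_sub_floor x ▸ rfl
  have hbdd : BddBelow (Set.range fun n : ℤ => |x - (n:ℝ)|) := by
    refine ⟨0, ?_⟩; rintro y ⟨n, rfl⟩; positivity
  apply le_antisymm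
  · apply le_min
    · have := ciInf_le hbdd ⌊x⌋
      rwa [abs_of_nonneg (by rw [hfe] at hf0; linarith), ← hfe] at this
    · have := ciInf_le hbdd (⌊x⌋ + 1)
      have h : |x - ((⌊x⌋ + 1 : ℤ):ℝ)| = 1 - Int.fract x := by
        push_cast
        rw [abs_of_nonpos (by rw [hfe] at hf1; linarith), hfe]; ring
      rwa [h] at this
  · apply le_ciInf
    intro n
    rcases le_or_gt (n:ℝ) (⌊x⌋:ℝ) with h | h
    · refine le_trans (min_le_left _ _) ?_
      rw [abs_of_nonneg (by rw [hfe] at hf0; linarith), hfe]; linarith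
    · have hn : (⌊x⌋:ℝ) + 1 ≤ (n:ℝ) := by exact_mod_cast Int.lt_iff_add_one_le.mp (by exact_mod_cast h)
      refine le_trans (min_le_right _ _) ?_
      rcases le_or_gt x n with hxn | hxn
      · rw [abs_of_nonpos (by linarith), hfe]; linarith
      · rw [abs_of_pos (by linarith), hfe]; linarith

lemma tent_eq (x : ℝ) : tent x = 2 * min (Int.fract x) (1 - Int.fract x) := by
  rw [tent, iInf_abs_sub]

lemma tent_nonneg (x : ℝ) : 0 ≤ tent x := by
  rw [tent_eq]
  have := Int.fract_nonneg x; have := Int.fract_lt_one x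
  have : 0 ≤ min (Int.fract x) (1 - Int.fract x) := le_min ‹_› (by linarith)
  linarith

lemma tent_le_one (x : ℝ) : tent x ≤ 1 := by
  rw [tent_eq]
  have h0 := Int.fract_nonneg x; have h1 := Int.fract_lt_one x
  rcases le_total (Int.fract x) (1 - Int.fract x) with h | h
  · rw [min_eq_left h]; linarith
  · rw [min_eq_right h]; linarith

lemma tent_natCast (m : ℕ) : tent (m : ℝ) = 0 := by
  rw [tent_eq, Int.fract_natCast]; norm_num



lemma testBit_iff_le_mod (k m : ℕ) : k.testBit m ↔ 2^m ≤ k % 2^(m+1) := by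
  have hpow : (0:ℕ) < 2^m := Nat.pow_pos (by norm_num)
  have hd : (k % 2^(m+1)) / 2^m = (k / 2^m) % 2 := by
    rw [pow_succ]; exact Nat.mod_mul_right_div_self k (2^m) 2
  have hlt : k % 2^(m+1) < 2 * 2^m := by
    rw [(by ring : 2 * 2^m = 2^(m+1))]; exact Nat.mod_lt _ (by positivity)
  have h2 : (k % 2^(m+1)) / 2^m < 2 := Nat.div_lt_iff_lt_mul hpow |>.mpr hlt
  have h3 : 2^m ≤ k % 2^(m+1) ↔ 1 ≤ (k % 2^(m+1)) / 2^m := by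
    rw [Nat.le_div_iff_mul_le hpow, one_mul]
  rw [Nat.testBit_eq_decide_div_mod_eq, decide_eq_true_eq, ← hd, h3]
  omega

lemma tent_div (r M q : ℕ) (hr : r ≤ M) (hM : 0 < M) :
    tent (((M * q + r : ℕ) : ℝ) / M) = 2 * min ((r:ℝ)/M) (1 - (r:ℝ)/M) := by
  have hM' : (0:ℝ) < M := by exact_mod_cast hM
  rcases eq_or_lt_of_le hr with heq | hlt
  · rw [heq]
    have h1 : ((M * q + M : ℕ) : ℝ) / M = ((q:ℝ) + 1) := by push_cast; field_simp
    have h2 : Int.fract ((q:ℝ) + 1) = 0 := by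
      rw [(by push_cast; ring : ((q:ℝ) + 1) = ((q + 1 : ℕ) : ℝ)), Int.fract_natCast]
    rw [h1, tent_eq, h2, div_self (ne_of_gt hM')]
    norm_num
  · have hx : ((M * q + r : ℕ) : ℝ) / M = (q:ℝ) + (r:ℝ)/M := by
      push_cast; field_simp
    rw [hx, tent_eq, Int.fract_natCast_add, Int.fract_eq_self.mpr ⟨by positivity,
      by rw [div_lt_one hM']; exact_mod_cast hlt⟩]

lemma tent_step (m k : ℕ) :
    tent (((k:ℝ)+1)/2^(m+1)) - tent ((k:ℝ)/2^(m+1)) =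
      (if Nat.testBit k m then (-1:ℝ) else 1) * (2 / 2^(m+1)) := by
  set M : ℕ := 2^(m+1) with hMdef
  have hM : 0 < M := by positivity
  have hM' : (0:ℝ) < (M:ℝ) := by exact_mod_cast hM
  set r : ℕ := k % M with hrdef
  have hrM : r < M := Nat.mod_lt _ hM
  have hk : k = M * (k / M) + r := by rw [hrdef]; exact (Nat.div_add_mod k M).symm
  have hk' : (k:ℝ) = (M:ℝ) * ((k / M : ℕ):ℝ) + (r:ℝ) := by exact_mod_cast hk
  have hMr : ((2:ℝ)^(m+1)) = (M:ℝ) := by rw [hMdef]; push_cast; ring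
  have h1 : ((k:ℝ)+1)/(M:ℝ) = ((M * (k / M) + (r+1) : ℕ) : ℝ) / M := by
    rw [hk']; push_cast; ring_nf
  have h2 : (k:ℝ)/(M:ℝ) = ((M * (k / M) + r : ℕ) : ℝ) / M := by rw [hk']; push_cast; ring_nf
  rw [hMr, h1, h2, tent_div _ _ _ hrM hM, tent_div _ _ _ hrM.le hM]
  have hbit : Nat.testBit k m ↔ 2^m ≤ r := testBit_iff_le_mod k m
  have hMtwo : (M:ℝ) = 2 * (2:ℝ)^m := by rw [hMdef]; push_cast; ring
  push_cast
  rw [one_sub_div hM'.ne', one_sub_div hM'.ne']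
  by_cases hb : 2^m ≤ r
  · rw [if_pos (hbit.mpr hb)]
    have hr2 : (2:ℝ)^m ≤ (r:ℝ) := by exact_mod_cast hb
    rw [min_eq_right (by gcongr; linarith), min_eq_right (by gcongr; linarith)]
    field_simp; ring
  · rw [if_neg (fun h => hb (hbit.mp h))]
    push_neg at hb
    have hr2 : (r:ℝ) + 1 ≤ (2:ℝ)^m := by exact_mod_cast hb
    rw [min_eq_left (by gcongr; linarith), min_eq_left (by gcongr; linarith)]
    field_simp; ring

lemma takagi_summable (α : ℝ) (hα : 0 < α) (x : ℝ) :
    Summable (fun j : ℕ => (1 / (2:ℝ) ^ (α * (j:ℝ))) * tent ((2:ℝ) ^ (j:ℕ) * x)) := by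
  have hr : (2:ℝ) ^ (-α) < 1 :=
    Real.rpow_lt_one_of_one_lt_of_neg one_lt_two (neg_lt_zero.mpr hα)
  have hr0 : 0 ≤ (2:ℝ) ^ (-α) := (Real.rpow_pos_of_pos two_pos _).le
  refine Summable.of_nonneg_of_le ?_ ?_ (summable_geometric_of_lt_one hr0 hr)
  · intro j
    exact mul_nonneg (by positivity) (tent_nonneg _)
  · intro j
    have h1 : (1:ℝ)/(2:ℝ)^(α*(j:ℝ)) = ((2:ℝ)^(-α))^j := by
      rw [← Real.rpow_natCast ((2:ℝ)^(-α)) j, ← Real.rpow_mul (by norm_num),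
        one_div, ← Real.rpow_neg (by norm_num)]
      congr 1; ring
    rw [← h1]
    calc (1:ℝ)/(2:ℝ)^(α*(j:ℝ)) * tent ((2:ℝ)^(j:ℕ) * x)
        ≤ 1/(2:ℝ)^(α*(j:ℝ)) * 1 := by
          apply mul_le_mul_of_nonneg_left (tent_le_one _) (by positivity)
      _ = 1/(2:ℝ)^(α*(j:ℝ)) := mul_one _

theorem takagi_diff_formula (α : ℝ) (hα : 0 < α) (n k : ℕ) (hk : k < 2 ^ (n + 1)) :
    takagi α (((k:ℝ) + 1) / 2 ^ (n + 1)) - takagi α ((k:ℝ) / 2 ^ (n + 1))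
      = ∑ i ∈ Finset.range (n + 1),
          (if k.testBit i then (-1:ℝ) else 1) / (2:ℝ) ^ (((n - i : ℕ):ℝ) * α + (i:ℝ)) := by
  set x1 : ℝ := ((k:ℝ) + 1) / 2 ^ (n + 1) with hx1
  set x2 : ℝ := (k:ℝ) / 2 ^ (n + 1) with hx2
  have hs1 := takagi_summable α hα x1
  have hs2 := takagi_summable α hα x2
  have hdiff : takagi α x1 - takagi α x2
      = ∑' j : ℕ, ((1 / (2:ℝ) ^ (α * (j:ℝ))) * tent ((2:ℝ) ^ (j:ℕ) * x1)
          - (1 / (2:ℝ) ^ (α * (j:ℝ))) * tent ((2:ℝ) ^ (j:ℕ) * x2)) := by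
    rw [takagi, takagi, ← Summable.tsum_sub hs1 hs2]
  rw [hdiff]
  rw [tsum_eq_sum (s := Finset.range (n + 1)) ?vanish]
  case vanish =>
    intro j hj
    have hjn : n + 1 ≤ j := by simpa using Finset.mem_range.not.mp hj
    have hsplit : (2:ℝ)^(j:ℕ) = 2^(n+1) * 2^(j-(n+1)) := by
      rw [← pow_add]; congr 1; omega
    have e2 : (2:ℝ)^(j:ℕ) * x2 = ((k * 2^(j-(n+1)) : ℕ):ℝ) := by
      rw [hx2, hsplit]; push_cast; field_simp
    have e1 : (2:ℝ)^(j:ℕ) * x1 = ((((k+1) * 2^(j-(n+1)) : ℕ)):ℝ) := by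
      rw [hx1, hsplit]; push_cast; field_simp
    rw [e1, e2, tent_natCast, tent_natCast]
    ring
  · conv_rhs => rw [← Finset.sum_range_reflect]
    apply Finset.sum_congr rfl
    intro j hj
    have hjn : j ≤ n := Nat.lt_succ_iff.mp (Finset.mem_range.mp hj)
    have hidx : n + 1 - 1 - j = n - j := by omega
    rw [hidx]
    have hsplit : (2:ℝ)^(n+1:ℕ) = 2^(j:ℕ) * 2^((n-j)+1) := by
      rw [← pow_add]; congr 1; omega
    have e1 : (2:ℝ)^(j:ℕ) * x1 = ((k:ℝ)+1)/2^((n-j)+1) := by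
      rw [hx1, hsplit]; field_simp
    have e2 : (2:ℝ)^(j:ℕ) * x2 = (k:ℝ)/2^((n-j)+1) := by
      rw [hx2, hsplit]; field_simp
    rw [← mul_sub, e1, e2, tent_step (n-j) k]
    have hnnj : (n - (n - j) : ℕ) = j := by omega
    rw [hnnj]
    rw [Real.rpow_add two_pos, Real.rpow_natCast, mul_comm ((j:ℕ):ℝ) α]
    have hA : (0:ℝ) < (2:ℝ)^(α * ((j:ℕ):ℝ)) := Real.rpow_pos_of_pos two_pos _
    have hB : (0:ℝ) < (2:ℝ)^((n-j:ℕ)) := by positivity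
    rw [pow_succ]
    field_simp
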